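/- Let 0 < μ < 1/m_φ. Then F_μ = M_{μφ} − M_{μg} is differentiable on ℝⁿ with ∇F_μ(z) = (x_{μg}(z) − x_{μφ}(z))/μ, and ∇F_μ is Lipschitz continuous with modulus L_{F_μ} = (2 − μ m_φ)/(μ − μ² m_φ). -/

import Mathlib

open scoped RealInnerProductSpace

noncomputable section

/-- `ℝⁿ` with the Euclidean norm. -/
abbrev En (n : ℕ) := EuclideanSpace ℝ (Fin n)

/-- `φ` is proper: finite somewhere and never `⊥`. -/
def ProperE {n : ℕ} (φ : En n → EReal) : Prop :=
  (∃ x, φ x ≠ ⊤) ∧ ∀ x, φ x ≠ ⊥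

/-- `φ` is `m`-weakly convex: `x ↦ φ x + (m/2)‖x‖²` is convex. -/
def WeaklyConvexOn {n : ℕ} (φ : En n → EReal) (m : ℝ) : Prop :=
  ∀ x y : En n, ∀ a b : ℝ, 0 ≤ a → 0 ≤ b → a + b = 1 →
    φ (a • x + b • y) + (((m / 2) * ‖a • x + b • y‖ ^ 2 : ℝ) : EReal) ≤
      (a : EReal) * (φ x + (((m / 2) * ‖x‖ ^ 2 : ℝ) : EReal)) +
        (b : EReal) * (φ y + (((m / 2) * ‖y‖ ^ 2 : ℝ) : EReal))

/-- `Mφ` is the Moreau envelope of `φ` with parameter `μ` and `xφ` the associated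
(unique) proximal mapping. -/
def IsMoreau {n : ℕ} (φ : En n → EReal) (μ : ℝ) (Mφ : En n → ℝ) (xφ : En n → En n) : Prop :=
  ∀ z : En n,
    (Mφ z : EReal) = φ (xφ z) + ((‖xφ z - z‖ ^ 2 / (2 * μ) : ℝ) : EReal) ∧
    (∀ x, (Mφ z : EReal) ≤ φ x + ((‖x - z‖ ^ 2 / (2 * μ) : ℝ) : EReal)) ∧
    (∀ x, φ x + ((‖x - z‖ ^ 2 / (2 * μ) : ℝ) : EReal) = (Mφ z : EReal) → x = xφ z)

/-- Real-valued version, for the convex function `g`. -/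
def IsMoreauR {n : ℕ} (g : En n → ℝ) (μ : ℝ) (Mg : En n → ℝ) (xg : En n → En n) : Prop :=
  ∀ z : En n,
    Mg z = g (xg z) + ‖xg z - z‖ ^ 2 / (2 * μ) ∧
    (∀ x, Mg z ≤ g x + ‖x - z‖ ^ 2 / (2 * μ)) ∧
    (∀ x, g x + ‖x - z‖ ^ 2 / (2 * μ) = Mg z → x = xg z)

lemma ereal_eq {e : EReal} {c d : ℝ} (h : (c:EReal) = e + d) : e = ((c - d : ℝ) : EReal) := by
  induction e using EReal.rec with
  | bot => simp at h
  | coe x =>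
      have hx : c = x + d := by exact_mod_cast h
      norm_cast; linarith
  | top => simp at h

lemma ereal_sub_le {e : EReal} (hbot : e ≠ ⊥) {c R : ℝ} (h : e + (c:EReal) ≤ (R:EReal)) :
    e ≤ ((R - c : ℝ) : EReal) := by
  induction e using EReal.rec with
  | bot => simp at hbot
  | coe x =>
      have hx : x + c ≤ R := by exact_mod_cast h
      norm_cast; linarith
  | top => simp at h

lemma comboIdentity {n : ℕ} (a b : ℝ) (hab : a + b = 1) (x y : En n) :
    a*‖x‖^2 + b*‖y‖^2 - ‖a•x+b•y‖^2 = a*b*‖x-y‖^2 := by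
  have h1 : ‖a•x + b•y‖^2 = ‖a•x‖^2 + 2*⟪a•x, b•y⟫ + ‖b•y‖^2 := norm_add_sq_real _ _
  have h2 : ‖x - y‖^2 = ‖x‖^2 - 2*⟪x,y⟫ + ‖y‖^2 := norm_sub_sq_real _ _
  have h3 : ⟪a•x, b•y⟫ = a*(b*⟪x,y⟫) := by
    rw [real_inner_smul_left, real_inner_smul_right]
  have h4 : ‖a•x‖^2 = a^2*‖x‖^2 := by rw [norm_smul]; simp [mul_pow, sq_abs]
  have h5 : ‖b•y‖^2 = b^2*‖y‖^2 := by rw [norm_smul]; simp [mul_pow, sq_abs]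
  rw [h1, h2, h3, h4, h5]
  linear_combination (-(a*‖x‖^2) - b*‖y‖^2) * hab

lemma growth {n : ℕ} (φ : En n → EReal) (hbot : ∀ x, φ x ≠ ⊥) (mφ μ : ℝ)
    (hweak : WeaklyConvexOn φ mφ) (hμ : 0 < μ)
    (Mφ : En n → ℝ) (xφ : En n → En n) (hφprox : IsMoreau φ μ Mφ xφ) (z z' : En n) :
    Mφ z + (1/μ - mφ)/2 * ‖xφ z' - xφ z‖^2 ≤
      (Mφ z' - ‖xφ z' - z'‖^2/(2*μ)) + ‖xφ z' - z‖^2/(2*μ) := by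
  set x := xφ z' with hxdef
  set p := xφ z with hpdef
  obtain ⟨e1, le1, -⟩ := hφprox z
  obtain ⟨e1', -, -⟩ := hφprox z'
  have hx : φ x = ((Mφ z' - ‖x - z'‖^2/(2*μ) : ℝ) : EReal) := ereal_eq e1'
  have hp : φ p = ((Mφ z - ‖p - z‖^2/(2*μ) : ℝ) : EReal) := ereal_eq e1
  set vx : ℝ := Mφ z' - ‖x - z'‖^2/(2*μ) with hvx
  set vp : ℝ := Mφ z - ‖p - z‖^2/(2*μ) with hvp
  have key : ∀ b : ℝ, 0 < b → b < 1 →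
      Mφ z + b * ((1/μ - mφ)/2 * ‖x - p‖^2) ≤ vx + ‖x - z‖^2/(2*μ) := by
    intro b hb0 hb1
    have hw := hweak x p (1-b) b (by linarith) hb0.le (by ring)
    rw [hx, hp] at hw
    set q : En n := (1-b) • x + b • p with hq
    set R : ℝ := (1-b)*(vx + mφ/2*‖x‖^2) + b*(vp + mφ/2*‖p‖^2) with hR
    have hw2 : φ q + ((mφ/2*‖q‖^2 : ℝ) : EReal) ≤ ((R : ℝ) : EReal) := by
      refine hw.trans_eq ?_
      rw [hR]; push_cast; ring_nf
    have hq2 := ereal_sub_le (hbot q) hw2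
    have h3 : ((Mφ z : ℝ) : EReal) ≤ ((R - mφ/2*‖q‖^2 + ‖q - z‖^2/(2*μ) : ℝ) : EReal) := by
      refine (le1 q).trans ?_
      calc φ q + ((‖q - z‖^2/(2*μ) : ℝ) : EReal)
          ≤ ((R - mφ/2*‖q‖^2 : ℝ) : EReal) + ((‖q - z‖^2/(2*μ) : ℝ) : EReal) :=
            add_le_add_left hq2 _
        _ = _ := by norm_cast
    have h4 : Mφ z ≤ R - mφ/2*‖q‖^2 + ‖q - z‖^2/(2*μ) := by exact_mod_cast h3
    have I1 := comboIdentity (1-b) b (by ring) x p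
    have hqz : q - z = (1-b)•(x-z) + b•(p-z) := by
      rw [hq, smul_sub, smul_sub]
      module
    have I2' : ‖q-z‖^2/(2*μ) = ((1-b)*‖x-z‖^2 + b*‖p-z‖^2 - (1-b)*b*‖x-p‖^2)/(2*μ) := by
      rw [hqz]
      have := comboIdentity (1-b) b (by ring) (x-z) (p-z)
      rw [sub_sub_sub_cancel_right] at this
      rw [show ‖(1-b)•(x-z)+b•(p-z)‖^2 = (1-b)*‖x-z‖^2 + b*‖p-z‖^2 - (1-b)*b*‖x-p‖^2 by linarith]
    have I1' : (mφ/2)*‖q‖^2 = (mφ/2)*((1-b)*‖x‖^2 + b*‖p‖^2 - (1-b)*b*‖x-p‖^2) := by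
      rw [show ‖q‖^2 = (1-b)*‖x‖^2 + b*‖p‖^2 - (1-b)*b*‖x-p‖^2 by linarith]
    have hdiv : ∀ r : ℝ, r/(2*μ) = r*μ⁻¹/2 := fun r => by
      rw [div_eq_mul_inv, mul_inv]; ring
    have G : (1-b)*(Mφ z + b * ((1/μ - mφ)/2 * ‖x - p‖^2)) ≤ (1-b)*(vx + ‖x - z‖^2/(2*μ)) := by
      rw [hR, hvp] at h4
      simp only [hdiv, one_div] at h4 I1' I2' ⊢
      nlinarith [h4, I1', I2']
    have hb : (0:ℝ) < 1 - b := by linarith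
    exact le_of_mul_le_mul_left G hb
  have cont : Filter.Tendsto (fun b : ℝ => Mφ z + b * ((1/μ - mφ)/2 * ‖x - p‖^2))
      (nhdsWithin 1 (Set.Iio 1)) (nhds (Mφ z + (1/μ - mφ)/2 * ‖x - p‖^2)) := by
    have hc : Continuous (fun b : ℝ => Mφ z + b * ((1/μ - mφ)/2 * ‖x - p‖^2)) :=
      continuous_const.add (continuous_id.mul continuous_const)
    simpa using (hc.tendsto 1).mono_left nhdsWithin_le_nhds
  have hmem : Set.Ioo (0:ℝ) 1 ∈ nhdsWithin (1:ℝ) (Set.Iio 1) :=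
    Ioo_mem_nhdsLT_of_mem (Set.mem_Ioc.mpr ⟨by norm_num, le_refl 1⟩)
  have hev : ∀ᶠ b in nhdsWithin (1:ℝ) (Set.Iio 1),
      Mφ z + b * ((1/μ - mφ)/2 * ‖x - p‖^2) ≤ vx + ‖x - z‖^2/(2*μ) := by
    filter_upwards [hmem] with b hb
    exact key b hb.1 hb.2
  have := le_of_tendsto cont hev
  linarith [this]

lemma proxLip {n : ℕ} (φ : En n → EReal) (hbot : ∀ x, φ x ≠ ⊥) (mφ μ : ℝ)
    (hweak : WeaklyConvexOn φ mφ) (hμ : 0 < μ) (hμm : μ * mφ < 1)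
    (Mφ : En n → ℝ) (xφ : En n → En n) (hφprox : IsMoreau φ μ Mφ xφ) (z₁ z₂ : En n) :
    (1 - μ * mφ) * ‖xφ z₁ - xφ z₂‖ ≤ ‖z₁ - z₂‖ := by
  have G1 := growth φ hbot mφ μ hweak hμ Mφ xφ hφprox z₁ z₂
  have G2 := growth φ hbot mφ μ hweak hμ Mφ xφ hφprox z₂ z₁
  have hrev : ‖xφ z₂ - xφ z₁‖^2 = ‖xφ z₁ - xφ z₂‖^2 := by rw [norm_sub_rev]
  rw [hrev] at G1
  have e : ‖xφ z₂-z₁‖^2 + ‖xφ z₁-z₂‖^2 - ‖xφ z₂-z₂‖^2 - ‖xφ z₁-z₁‖^2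
      = 2*⟪xφ z₁-xφ z₂, z₁-z₂⟫ := by
    simp only [norm_sub_sq_real, inner_sub_left, inner_sub_right]
    ring
  have e' : (‖xφ z₂-z₁‖^2 + ‖xφ z₁-z₂‖^2 - ‖xφ z₂-z₂‖^2 - ‖xφ z₁-z₁‖^2)/(2*μ)
      = 2*⟪xφ z₁-xφ z₂, z₁-z₂⟫/(2*μ) := by rw [e]
  have hdiv : ∀ r : ℝ, r/(2*μ) = r*μ⁻¹/2 := fun r => by
    rw [div_eq_mul_inv, mul_inv]; ring
  have hsum : (1/μ - mφ) * ‖xφ z₁ - xφ z₂‖^2 ≤ ⟪xφ z₁-xφ z₂, z₁-z₂⟫ * μ⁻¹ := by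
    simp only [hdiv, one_div] at G1 G2 e' ⊢
    linarith [G1, G2, e']
  have h2 : (1 - μ*mφ) * ‖xφ z₁-xφ z₂‖^2 ≤ ⟪xφ z₁-xφ z₂, z₁-z₂⟫ := by
    have e3 : (1 - μ*mφ) * ‖xφ z₁-xφ z₂‖^2 = μ * ((1/μ - mφ) * ‖xφ z₁-xφ z₂‖^2) := by
      field_simp
    have e4 : ⟪xφ z₁-xφ z₂, z₁-z₂⟫ = μ * (⟪xφ z₁-xφ z₂, z₁-z₂⟫ * μ⁻¹) := by
      field_simp
    rw [e3, e4]
    exact mul_le_mul_of_nonneg_left hsum hμ.le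
  have hcs : ⟪xφ z₁-xφ z₂, z₁-z₂⟫ ≤ ‖xφ z₁-xφ z₂‖ * ‖z₁-z₂‖ := real_inner_le_norm _ _
  rcases eq_or_lt_of_le (norm_nonneg (xφ z₁ - xφ z₂)) with h0 | h0
  · rw [← h0, mul_zero]; exact norm_nonneg _
  · nlinarith [h2, hcs, h0]

lemma envUpper {n : ℕ} (φ : En n → EReal) (μ : ℝ) (hμ : 0 < μ)
    (Mφ : En n → ℝ) (xφ : En n → En n) (hφprox : IsMoreau φ μ Mφ xφ) (z w : En n) :
    Mφ w ≤ Mφ z + ⟪μ⁻¹ • (z - xφ z), w - z⟫ + ‖w - z‖^2/(2*μ) := by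
  obtain ⟨e1, -, -⟩ := hφprox z
  obtain ⟨-, le1, -⟩ := hφprox w
  have hp : φ (xφ z) = ((Mφ z - ‖xφ z - z‖^2/(2*μ) : ℝ) : EReal) := ereal_eq e1
  have h1 : ((Mφ w : ℝ) : EReal) ≤
      ((Mφ z - ‖xφ z - z‖^2/(2*μ) + ‖xφ z - w‖^2/(2*μ) : ℝ) : EReal) := by
    refine (le1 (xφ z)).trans_eq ?_
    rw [hp]; norm_cast
  have h2 : Mφ w ≤ Mφ z - ‖xφ z - z‖^2/(2*μ) + ‖xφ z - w‖^2/(2*μ) := by exact_mod_cast h1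
  have hid : ‖xφ z - w‖^2 = ‖xφ z - z‖^2 + 2*⟪xφ z - z, z - w⟫ + ‖z - w‖^2 := by
    rw [show xφ z - w = (xφ z - z) + (z - w) by abel]
    exact norm_add_sq_real _ _
  have hin : ⟪μ⁻¹ • (z - xφ z), w - z⟫ = μ⁻¹ * ⟪z - xφ z, w - z⟫ := real_inner_smul_left _ _ _
  have hin2 : ⟪xφ z - z, z - w⟫ = ⟪z - xφ z, w - z⟫ := by
    rw [show xφ z - z = -(z - xφ z) by abel, show z - w = -(w - z) by abel, inner_neg_neg]
  have hrev : ‖z - w‖^2 = ‖w - z‖^2 := by rw [norm_sub_rev]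
  have hdiv : ∀ r : ℝ, r/(2*μ) = r*μ⁻¹/2 := fun r => by
    rw [div_eq_mul_inv, mul_inv]; ring
  simp only [hdiv] at h2 ⊢
  rw [hin]
  rw [hid, hin2, hrev] at h2
  linarith [h2]

lemma envGrad {n : ℕ} (φ : En n → EReal) (hbot : ∀ x, φ x ≠ ⊥) (mφ μ : ℝ)
    (hweak : WeaklyConvexOn φ mφ) (hμ : 0 < μ) (hμm : μ * mφ < 1)
    (Mφ : En n → ℝ) (xφ : En n → En n) (hφprox : IsMoreau φ μ Mφ xφ) (z : En n) :
    HasGradientAt Mφ (μ⁻¹ • (z - xφ z)) z := by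
  have hs : (0:ℝ) < 1 - μ * mφ := by linarith
  set C : ℝ := μ⁻¹ * (1 + (1 - μ*mφ)⁻¹) with hC
  have hCpos : 0 < C := by positivity
  have hbound : ∀ w : En n, |Mφ w - Mφ z - ⟪μ⁻¹ • (z - xφ z), w - z⟫| ≤ C * ‖w - z‖^2 := by
    intro w
    have hdiv : ∀ r : ℝ, r/(2*μ) = r*μ⁻¹/2 := fun r => by
      rw [div_eq_mul_inv, mul_inv]; ring
    rw [abs_le]
    constructor
    · -- lower bound
      have E1 := envUpper φ μ hμ Mφ xφ hφprox w z
      have hin1 : ⟪μ⁻¹ • (w - xφ w), z - w⟫ = μ⁻¹ * ⟪w - xφ w, z - w⟫ :=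
        real_inner_smul_left _ _ _
      have hin2 : ⟪μ⁻¹ • (z - xφ z), w - z⟫ = μ⁻¹ * ⟪z - xφ z, w - z⟫ :=
        real_inner_smul_left _ _ _
      have hkey : ⟪w - xφ w, z - w⟫ + ⟪z - xφ z, w - z⟫ = ⟪xφ w - xφ z, w - z⟫ - ‖w - z‖^2 := by
        rw [show w - xφ w = -(xφ w - w) by abel, show z - w = -(w - z) by abel, inner_neg_neg]
        rw [← inner_add_left, show xφ w - w + (z - xφ z) = (xφ w - xφ z) - (w - z) by abel,
          inner_sub_left, real_inner_self_eq_norm_sq]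
      have hkey' : μ⁻¹ * ⟪w - xφ w, z - w⟫ + μ⁻¹ * ⟪z - xφ z, w - z⟫
          = μ⁻¹ * ⟪xφ w - xφ z, w - z⟫ - μ⁻¹ * ‖w - z‖^2 := by
        rw [← mul_sub, ← mul_add, hkey]
      have hlip := proxLip φ hbot mφ μ hweak hμ hμm Mφ xφ hφprox w z
      have hq : ‖xφ w - xφ z‖ ≤ (1 - μ*mφ)⁻¹ * ‖w - z‖ := by
        rw [← div_eq_inv_mul, le_div_iff₀ hs]
        linarith [hlip]
      have hcs : ⟪xφ w - xφ z, w - z⟫ ≤ ‖xφ w - xφ z‖ * ‖w - z‖ := real_inner_le_norm _ _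
      have h5 : ⟪xφ w - xφ z, w - z⟫ ≤ (1 - μ*mφ)⁻¹ * ‖w - z‖ * ‖w - z‖ :=
        hcs.trans (mul_le_mul_of_nonneg_right hq (norm_nonneg _))
      have h6 : μ⁻¹ * ⟪xφ w - xφ z, w - z⟫ ≤ μ⁻¹ * ((1 - μ*mφ)⁻¹ * ‖w - z‖ * ‖w - z‖) :=
        mul_le_mul_of_nonneg_left h5 (by positivity)
      have hrev : ‖z - w‖^2 = ‖w - z‖^2 := by rw [norm_sub_rev]
      have hpos : (0:ℝ) ≤ μ⁻¹ * ‖w - z‖^2 := by positivity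
      have hsq : ‖w - z‖ * ‖w - z‖ = ‖w - z‖^2 := by ring
      rw [hin1, hrev] at E1
      rw [hin2, hC]
      simp only [hdiv] at E1
      nlinarith [E1, hkey', h6, hpos, hsq]
    · -- upper bound
      have E0 := envUpper φ μ hμ Mφ xφ hφprox z w
      have h7 : ‖w - z‖^2/(2*μ) ≤ C * ‖w - z‖^2 := by
        rw [hC]
        rw [div_le_iff₀ (by positivity : (0:ℝ) < 2*μ)]
        have h8 : (0:ℝ) ≤ μ⁻¹ * (1 - μ*mφ)⁻¹ * ‖w - z‖^2 * (2*μ) := by positivity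
        have h9 : μ⁻¹ * ‖w - z‖^2 * (2*μ) = 2 * (μ⁻¹ * μ) * ‖w - z‖^2 := by ring
        have h10 : μ⁻¹ * μ = 1 := inv_mul_cancel₀ hμ.ne'
        nlinarith [h8, sq_nonneg ‖w - z‖]
      linarith [E0, h7]
  rw [hasGradientAt_iff_isLittleO, Asymptotics.isLittleO_iff]
  intro c hc
  rw [Metric.eventually_nhds_iff]
  refine ⟨c / C, by positivity, fun {w} hw => ?_⟩
  have h1 := hbound w
  have h2 : ‖w - z‖ < c / C := by
    rw [← dist_eq_norm]; exact hw
  have h3 : C * ‖w - z‖^2 ≤ c * ‖w - z‖ := by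
    have : C * ‖w - z‖ ≤ c := by
      rcases eq_or_lt_of_le (norm_nonneg (w - z)) with h0 | h0
      · rw [← h0, mul_zero]; exact hc.le
      · have hlt := mul_lt_mul_of_pos_left h2 hCpos
        have e : C * (c / C) = c := by field_simp
        linarith
    calc C * ‖w - z‖^2 = (C * ‖w - z‖) * ‖w - z‖ := by ring
      _ ≤ c * ‖w - z‖ := mul_le_mul_of_nonneg_right this (norm_nonneg _)
  rw [Real.norm_eq_abs]
  calc |Mφ w - Mφ z - ⟪μ⁻¹ • (z - xφ z), w - z⟫| ≤ C * ‖w - z‖^2 := h1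
    _ ≤ c * ‖w - z‖ := h3

lemma coeMoreau {n : ℕ} (g : En n → ℝ) (μ : ℝ) (Mg : En n → ℝ) (xg : En n → En n)
    (h : IsMoreauR g μ Mg xg) : IsMoreau (fun x => ((g x : ℝ) : EReal)) μ Mg xg := by
  intro z
  obtain ⟨h1, h2, h3⟩ := h z
  refine ⟨?_, fun x => ?_, fun x hx => ?_⟩
  · show (Mg z : EReal) = ((g (xg z) : ℝ) : EReal) + _
    exact_mod_cast congrArg (fun r : ℝ => (r : EReal)) h1
  · show (Mg z : EReal) ≤ ((g x : ℝ) : EReal) + _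
    exact_mod_cast h2 x
  · refine h3 x ?_
    have hx' : ((g x : ℝ) : EReal) + ((‖x - z‖ ^ 2 / (2 * μ) : ℝ) : EReal) = ((Mg z : ℝ) : EReal) := hx
    exact_mod_cast hx'

lemma coeWeak {n : ℕ} (g : En n → ℝ) (hg : ConvexOn ℝ Set.univ g) :
    WeaklyConvexOn (fun x => ((g x : ℝ) : EReal)) 0 := by
  intro x y a b ha hb hab
  have := hg.2 (Set.mem_univ x) (Set.mem_univ y) ha hb hab
  push_cast
  simp only [zero_div, zero_mul, EReal.coe_zero, add_zero]
  calc ((g (a • x + b • y) : ℝ) : EReal) ≤ ((a * g x + b * g y : ℝ) : EReal) := by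
        exact_mod_cast this
    _ = (a : EReal) * (g x : ℝ) + (b : EReal) * (g y : ℝ) := by push_cast; ring_nf


/-- `F_μ = M_{μφ} - M_{μg}` is differentiable with
`∇F_μ(z) = (x_{μg}(z) - x_{μφ}(z))/μ`, and `∇F_μ` is Lipschitz with modulus
`(2 - μ m_φ)/(μ - μ² m_φ)`. -/
theorem stmt4 {n : ℕ} (φ : En n → EReal) (g : En n → ℝ) (mφ μ : ℝ)
    (hproper : ProperE φ) (hlsc : LowerSemicontinuous φ)
    (hmφ : 0 ≤ mφ) (hweak : WeaklyConvexOn φ mφ)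
    (hg : ConvexOn ℝ Set.univ g)
    (hμ : 0 < μ) (hμm : μ * mφ < 1)
    (Mφ : En n → ℝ) (xφ : En n → En n) (hφprox : IsMoreau φ μ Mφ xφ)
    (Mg : En n → ℝ) (xg : En n → En n) (hgprox : IsMoreauR g μ Mg xg) :
    (∀ z : En n, HasGradientAt (fun w => Mφ w - Mg w) (μ⁻¹ • (xg z - xφ z)) z) ∧
    (∀ z₁ z₂ : En n,
      ‖μ⁻¹ • (xg z₁ - xφ z₁) - μ⁻¹ • (xg z₂ - xφ z₂)‖ ≤
        (2 - μ * mφ) / (μ - μ ^ 2 * mφ) * ‖z₁ - z₂‖) := by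
  have hbot := hproper.2
  have hgbot : ∀ x : En n, ((g x : ℝ) : EReal) ≠ ⊥ := fun x => EReal.coe_ne_bot _
  have hgweak := coeWeak g hg
  have hgprox' := coeMoreau g μ Mg xg hgprox
  have hμm0 : μ * 0 < 1 := by linarith
  constructor
  · intro z
    have h1 := envGrad φ hbot mφ μ hweak hμ hμm Mφ xφ hφprox z
    have h2 := envGrad _ hgbot 0 μ hgweak hμ hμm0 Mg xg hgprox' z
    rw [hasGradientAt_iff_hasFDerivAt] at h1 h2 ⊢
    have h3 := h1.sub h2
    have h4 : InnerProductSpace.toDual ℝ (En n) (μ⁻¹ • (z - xφ z)) - InnerProductSpace.toDual ℝ (En n) (μ⁻¹ • (z - xg z))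
        = InnerProductSpace.toDual ℝ (En n) (μ⁻¹ • (xg z - xφ z)) := by
      rw [← map_sub, ← smul_sub, show (z - xφ z) - (z - xg z) = xg z - xφ z by abel]
    rw [← h4]
    exact h3
  · intro z₁ z₂
    have h1 := proxLip φ hbot mφ μ hweak hμ hμm Mφ xφ hφprox z₁ z₂
    have h2 := proxLip _ hgbot 0 μ hgweak hμ hμm0 Mg xg hgprox' z₁ z₂
    simp only [mul_zero, sub_zero, one_mul] at h2
    have hs : (0:ℝ) < 1 - μ * mφ := by linarith
    have hnorm : ‖μ⁻¹ • (xg z₁ - xφ z₁) - μ⁻¹ • (xg z₂ - xφ z₂)‖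
        = μ⁻¹ * ‖(xg z₁ - xg z₂) - (xφ z₁ - xφ z₂)‖ := by
      rw [← smul_sub, norm_smul, Real.norm_eq_abs, abs_of_pos (by positivity)]
      congr 2
      abel
    rw [hnorm]
    have htri : ‖(xg z₁ - xg z₂) - (xφ z₁ - xφ z₂)‖ ≤ ‖xg z₁ - xg z₂‖ + ‖xφ z₁ - xφ z₂‖ :=
      norm_sub_le _ _
    have hμs : (0:ℝ) < μ - μ^2*mφ := by nlinarith
    rw [div_mul_eq_mul_div, le_div_iff₀ hμs]
    have e : μ⁻¹ * ‖(xg z₁ - xg z₂) - (xφ z₁ - xφ z₂)‖ * (μ - μ^2*mφ)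
        = ‖(xg z₁ - xg z₂) - (xφ z₁ - xφ z₂)‖ * (1 - μ*mφ) := by
      field_simp
    rw [e]
    nlinarith [mul_le_mul_of_nonneg_right h2 hs.le, h1, htri, norm_nonneg ((xg z₁ - xg z₂) - (xφ z₁ - xφ z₂)), norm_nonneg (xφ z₁ - xφ z₂), norm_nonneg (xg z₁ - xg z₂)]
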